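/- Let (Ω, ℱ, P) be a probability space, E_1, …, E_m ∈ ℱ events, p' ∈ (0,1], and U_1, …, U_m i.i.d. Bernoulli(p') random variables that are independent of the σ-algebra generated by E_1, …, E_m. Set E'_k = E_k ∩ {U_k = 1}. Then for every integer r with 0 ≤ r ≤ m: P( (⋂_{k=1}^m (E'_k)^c) ∩ { #{k : ω ∈ E_k} ≥ r } ) ≤ (1 − p')^r. (Independent-thinning bound: if at least r of the events occur but none of their thinned versions does, then at least r independent Bernoulli(p') trials all failed.) -/

import Mathlib

open MeasureTheory ProbabilityTheory
open scoped Classical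

/-- Independent-thinning bound: if `E'_k = E_k ∩ {U_k = 1}` where the `U_k` are
i.i.d. `Bernoulli(p')` independent of `σ(E_1, …, E_m)`, then the probability that
at least `r` of the events `E_k` occur while none of the thinned events `E'_k`
occurs is at most `(1 - p')^r`. -/
theorem independent_thinning_bound
    {Ω : Type*} [MeasurableSpace Ω] (P : Measure Ω) [IsProbabilityMeasure P]
    (m : ℕ) (E : Fin m → Set Ω) (hE : ∀ k, MeasurableSet (E k))
    (p' : ℝ) (hp'0 : 0 < p') (hp'1 : p' ≤ 1)
    (U : Fin m → Ω → Bool) (hUmeas : ∀ k, Measurable (U k))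
    (hUdist : ∀ k, P {ω | U k ω = true} = ENNReal.ofReal p')
    (hUiid : iIndepFun (fun k ω => U k ω) P)
    (hUindepE : Indep
      (MeasurableSpace.comap (fun ω (k : Fin m) => U k ω) MeasurableSpace.pi)
      (MeasurableSpace.generateFrom (Set.range E)) P)
    (r : ℕ) (hr : r ≤ m) :
    P ((⋂ k, (E k ∩ {ω | U k ω = true})ᶜ) ∩
        {ω | r ≤ (Finset.univ.filter fun k => ω ∈ E k).card})
      ≤ ENNReal.ofReal ((1 - p') ^ r) := by
  classical
  have hsub0 : (0:ℝ) ≤ 1 - p' := by linarith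
  have hsub1 : 1 - p' ≤ 1 := by linarith
  -- pattern sets
  set B : Finset (Fin m) → Set Ω := fun S => {ω | ∀ k, ω ∈ E k ↔ k ∈ S} with hBdef
  have hBeq : ∀ S, B S = ⋂ k, (if k ∈ S then E k else (E k)ᶜ) := by
    intro S
    ext ω
    simp only [hBdef, Set.mem_setOf_eq, Set.mem_iInter]
    constructor
    · intro h k
      by_cases hk : k ∈ S <;> simp [hk, (h k)] at * <;> tauto
    · intro h k
      have := h k
      by_cases hk : k ∈ S <;> simp [hk] at this ⊢ <;> tauto
  have hBmeas : ∀ S, MeasurableSet (B S) := by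
    intro S
    rw [hBeq]
    refine MeasurableSet.iInter fun k => ?_
    by_cases hk : k ∈ S <;> simp [hk, hE k, (hE k).compl]
  have hBgen : ∀ S, MeasurableSet[MeasurableSpace.generateFrom (Set.range E)] (B S) := by
    intro S
    rw [hBeq]
    refine MeasurableSet.iInter fun k => ?_
    have hk : MeasurableSet[MeasurableSpace.generateFrom (Set.range E)] (E k) :=
      MeasurableSpace.measurableSet_generateFrom ⟨k, rfl⟩
    by_cases h : k ∈ S <;> simp [h, hk, hk.compl]
  have hBdisj : ∀ S S' : Finset (Fin m), S ≠ S' → Disjoint (B S) (B S') := by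
    intro S S' hne
    rw [Set.disjoint_left]
    intro ω hS hS'
    apply hne
    ext k
    rw [← hS k, ← hS' k]
  -- the "all U fail on S" sets
  set C : Finset (Fin m) → Set Ω := fun S => ⋂ k ∈ S, {ω | U k ω = false} with hCdef
  have hCcomap : ∀ S, MeasurableSet[MeasurableSpace.comap
      (fun ω (k : Fin m) => U k ω) MeasurableSpace.pi] (C S) := by
    intro S
    refine ⟨⋂ k ∈ S, (fun g : Fin m → Bool => g k) ⁻¹' {false}, ?_, ?_⟩
    · exact MeasurableSet.biInter S.countable_toSet fun k _ =>
        (measurable_pi_apply k) (measurableSet_singleton false)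
    · ext ω; simp [hCdef]
  have hCmeas : ∀ S, P (C S) = ENNReal.ofReal ((1 - p') ^ S.card) := by
    intro S
    have h1 : ∀ k : Fin m, P {ω | U k ω = false} = ENNReal.ofReal (1 - p') := by
      intro k
      have : {ω | U k ω = false} = {ω | U k ω = true}ᶜ := by
        ext ω; simp
      have hm : MeasurableSet {ω | U k ω = true} := (hUmeas k) (measurableSet_singleton true)
      rw [this, measure_compl hm (measure_ne_top _ _),
        hUdist k, measure_univ, ENNReal.ofReal_sub _ hp'0.le, ENNReal.ofReal_one]
    have := hUiid.meas_biInter (S := S) (s := fun k => {ω | U k ω = false})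
      (fun k _ => ⟨{false}, measurableSet_singleton false, rfl⟩)
    rw [hCdef]
    simp only [this, h1, Finset.prod_const, ← ENNReal.ofReal_pow hsub0]
  -- target
  set T : Set Ω := (⋂ k, (E k ∩ {ω | U k ω = true})ᶜ) ∩
      {ω | r ≤ (Finset.univ.filter fun k => ω ∈ E k).card} with hTdef
  have hTsub : T ⊆ ⋃ S ∈ (Finset.univ.filter fun S : Finset (Fin m) => r ≤ S.card),
      C S ∩ B S := by
    intro ω hω
    obtain ⟨h1, h2⟩ := hω
    set S := Finset.univ.filter fun k => ω ∈ E k with hSdef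
    have hmemB : ω ∈ B S := by
      intro k; simp [hSdef]
    have hmemC : ω ∈ C S := by
      simp only [hCdef, Set.mem_iInter]
      intro k hk
      have hEk : ω ∈ E k := by simpa [hSdef] using hk
      have := Set.mem_iInter.1 h1 k
      simp only [Set.mem_compl_iff, Set.mem_inter_iff, Set.mem_setOf_eq] at this
      rcases Bool.eq_false_or_eq_true (U k ω) with h | h
      · exact absurd ⟨hEk, h⟩ this
      · exact h
    refine Set.mem_biUnion ?_ ⟨hmemC, hmemB⟩
    exact Finset.mem_coe.2 (Finset.mem_filter.2 ⟨Finset.mem_univ _, h2⟩)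
  calc P T ≤ P (⋃ S ∈ (Finset.univ.filter fun S : Finset (Fin m) => r ≤ S.card),
      C S ∩ B S) := measure_mono hTsub
    _ ≤ ∑ S ∈ (Finset.univ.filter fun S : Finset (Fin m) => r ≤ S.card),
        P (C S ∩ B S) := measure_biUnion_finset_le _ _
    _ ≤ ∑ S ∈ (Finset.univ.filter fun S : Finset (Fin m) => r ≤ S.card),
        ENNReal.ofReal ((1 - p') ^ r) * P (B S) := by
      refine Finset.sum_le_sum fun S hS => ?_
      have hSr : r ≤ S.card := (Finset.mem_filter.1 hS).2
      have hind := (hUindepE.indepSet_of_measurableSet (hCcomap S)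
        (hBgen S)).measure_inter_eq_mul
      rw [hind, hCmeas S]
      refine mul_le_mul_left (ENNReal.ofReal_le_ofReal ?_) _
      exact pow_le_pow_of_le_one hsub0 hsub1 hSr
    _ = ENNReal.ofReal ((1 - p') ^ r) * ∑ S ∈ (Finset.univ.filter
        fun S : Finset (Fin m) => r ≤ S.card), P (B S) := by
      rw [Finset.mul_sum]
    _ ≤ ENNReal.ofReal ((1 - p') ^ r) * 1 := by
      refine mul_le_mul_right ?_ _
      have := measure_biUnion_finset (μ := P)
        (s := Finset.univ.filter fun S : Finset (Fin m) => r ≤ S.card)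
        (f := B) (fun S _ S' _ h => hBdisj S S' h) (fun S _ => hBmeas S)
      rw [← this]
      exact (measure_mono (Set.subset_univ _)).trans_eq measure_univ
    _ = ENNReal.ofReal ((1 - p') ^ r) := mul_one _
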